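/- (Structural core of the EPTAS via Baker layering.) Let G be an embedded digraph with nonnegative rational edge weights w. Let ≈ be the symmetric relation on V with u ≈ u' if and only if some e ∈ E has {tail e, head e} = {u, u'}; assume the simple graph (V, ≈) is connected, fix a root r ∈ V, and for u ∈ V let d(u) be the graph distance from r to u in (V, ≈). For an integer t ≥ 1 and 0 ≤ i < t, let E^(i) = { e ∈ E : {d(tail e), d(head e)} = {j, j+1} for some j with j ≡ i (mod t) }. Then there exists an index i ∈ {0, …, t−1} such that MBW(G[E ∖ E^(i)], w) ≥ (1 − 1/t) · MBW(G, w). -/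

import Mathlib

open scoped Classical

/-- An embedded digraph: a finite edge set `edges` within an ambient type `E`,
maps `tail, head : E → V` with `tail e ≠ head e` for edges, and for each vertex a
cyclic ordering `rot v` (a list, considered up to rotation) containing exactly once
each dart at `v`.  A dart is a pair `(e, b)` where `b = true` marks the in-dart
(with `head e = v`) and `b = false` the out-dart (with `tail e = v`). -/
structure EmbDigraph (V : Type*) (E : Type*) where
  edges : Finset E
  tail : E → V
  head : E → V
  tail_ne_head : ∀ e ∈ edges, tail e ≠ head e
  rot : V → List (E × Bool)
  rot_nodup : ∀ u : V, (rot u).Nodup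
  mem_rot : ∀ (u : V) (d : E × Bool),
    d ∈ rot u ↔ d.1 ∈ edges ∧ ((d.2 = true ∧ head d.1 = u) ∨ (d.2 = false ∧ tail d.1 = u))

namespace EmbDigraph

variable {V : Type*} {E : Type*}

/-- A list of booleans consisting of a block of `true`s followed by a block of
`false`s: all in-darts precede all out-darts. -/
def IsTwoBlock (l : List Bool) : Prop :=
  ∃ a b : ℕ, l = List.replicate a true ++ List.replicate b false

/-- Vertex `u` is bimodal in the spanning subgraph `G[F]`: some rotation of its
dart list, restricted to the darts of edges in `F`, has all in-darts preceding all
out-darts. -/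
def VertexBimodalIn (G : EmbDigraph V E) (F : Finset E) (u : V) : Prop :=
  ∃ n : ℕ,
    IsTwoBlock ((((G.rot u).rotate n).filter fun d => decide (d.1 ∈ F)).map Prod.snd)

/-- The spanning subgraph `G[F]` is bimodal: every vertex is bimodal in it. -/
def BimodalIn (G : EmbDigraph V E) (F : Finset E) : Prop :=
  ∀ u : V, G.VertexBimodalIn F u

/-- A vertex is good if it is bimodal in `G` itself; otherwise it is bad. -/
def Good (G : EmbDigraph V E) (u : V) : Prop :=
  G.VertexBimodalIn G.edges u

/-- `m` is the maximum weight `MBW(G, w)` of a bimodal spanning subgraph of `G`. -/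
def IsMBW (G : EmbDigraph V E) (w : E → ℚ) (m : ℚ) : Prop :=
  IsGreatest {x : ℚ | ∃ F : Finset E, F ⊆ G.edges ∧ G.BimodalIn F ∧ ∑ e ∈ F, w e = x} m

end EmbDigraph

namespace EmbDigraph

variable {V : Type*} {E : Type*}

/-- The underlying simple graph `(V, ≈)`: `u ≈ u'` iff some edge has endpoint set
`{u, u'}`. -/
def underlying (G : EmbDigraph V E) : SimpleGraph V where
  Adj u u' := u ≠ u' ∧
    ∃ e ∈ G.edges, (G.tail e = u ∧ G.head e = u') ∨ (G.tail e = u' ∧ G.head e = u)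
  symm := ⟨by
    rintro u u' ⟨h, e, he, h'⟩
    exact ⟨h.symm, e, he, h'.symm⟩⟩
  loopless := ⟨fun u h => h.1 rfl⟩

/-- `m` is the maximum weight of a bimodal spanning subgraph of `G` using only
edges from `A`, i.e. `MBW(G[A], w)`. -/
def IsMBWOn (G : EmbDigraph V E) (w : E → ℚ) (A : Finset E) (m : ℚ) : Prop :=
  IsGreatest
    {x : ℚ | ∃ F : Finset E, F ⊆ A ∧ F ⊆ G.edges ∧ G.BimodalIn F ∧ ∑ e ∈ F, w e = x} m

end EmbDigraph

open EmbDigraph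


section Aux

lemma isTwoBlock_of_sublist {l l' : List Bool} (h : List.Sublist l' l)
    (hl : EmbDigraph.IsTwoBlock l) : EmbDigraph.IsTwoBlock l' := by
  obtain ⟨a, b, rfl⟩ := hl
  rw [List.sublist_append_iff] at h
  obtain ⟨s, u, rfl, hs, hu⟩ := h
  exact ⟨s.length, u.length, by
    rw [← List.eq_replicate_length.mpr fun x hx => List.eq_of_mem_replicate (hs.subset hx),
      ← List.eq_replicate_length.mpr fun x hx => List.eq_of_mem_replicate (hu.subset hx)]⟩

lemma bimodalIn_mono {V E : Type*} (G : EmbDigraph V E) {F' F : Finset E}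
    (hsub : F' ⊆ F) (h : G.BimodalIn F) : G.BimodalIn F' := by
  intro u
  obtain ⟨n, hn⟩ := h u
  refine ⟨n, isTwoBlock_of_sublist ?_ hn⟩
  exact (List.monotone_filter_right _ fun d hd => by
    simp only [decide_eq_true_eq] at hd ⊢
    exact hsub hd).map Prod.snd

end Aux

/-- Structural core of the EPTAS via Baker layering: with `d(u)` the BFS distance
from a root `r` in the connected underlying graph, and
`E^(i) = {e : {d(tail e), d(head e)} = {j, j+1} for some j ≡ i (mod t)}`, there is
an index `i < t` with `MBW(G[E ∖ E^(i)], w) ≥ (1 - 1/t) · MBW(G, w)`. -/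
theorem baker_layering {V E : Type*} (G : EmbDigraph V E) (w : E → ℚ)
    (hw : ∀ e, 0 ≤ w e) (hconn : G.underlying.Connected) (r : V)
    (t : ℕ) (ht : 1 ≤ t) :
    ∃ i < t, ∀ m mi : ℚ, G.IsMBW w m →
      G.IsMBWOn w
        (G.edges \ (G.edges.filter fun e => ∃ j : ℕ, j % t = i ∧
          ((G.underlying.dist r (G.tail e) = j ∧ G.underlying.dist r (G.head e) = j + 1) ∨
            (G.underlying.dist r (G.tail e) = j + 1 ∧ G.underlying.dist r (G.head e) = j)))) mi →
      (1 - 1 / (t : ℚ)) * m ≤ mi := by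
  classical
  by_cases hex : ∃ m : ℚ, G.IsMBW w m
  · obtain ⟨m₀, hm₀⟩ := hex
    obtain ⟨F₀, hF₀sub, hF₀bim, hF₀sum⟩ := hm₀.1
    set Q : ℕ → E → Prop := fun i e => ∃ j : ℕ, j % t = i ∧
      ((G.underlying.dist r (G.tail e) = j ∧ G.underlying.dist r (G.head e) = j + 1) ∨
        (G.underlying.dist r (G.tail e) = j + 1 ∧ G.underlying.dist r (G.head e) = j)) with hQ
    -- each edge satisfies Q i for at most one i
    have hQuniq : ∀ e i i', Q i e → Q i' e → i = i' := by
      rintro e i i' ⟨j, hj, hj2⟩ ⟨j', hj', hj2'⟩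
      have hjj : j = j' := by
        rcases hj2 with ⟨h1, h2⟩ | ⟨h1, h2⟩ <;> rcases hj2' with ⟨h1', h2'⟩ | ⟨h1', h2'⟩ <;> omega
      rw [← hj, ← hj', hjj]
    set S : ℕ → ℚ := fun i => ∑ e ∈ F₀.filter (Q i), w e with hS
    have hdisj : (↑(Finset.range t) : Set ℕ).PairwiseDisjoint
        (fun i => F₀.filter (Q i)) := by
      intro i _ i' _ hne
      simp only [Function.onFun]
      rw [Finset.disjoint_left]
      intro e he he'
      rw [Finset.mem_filter] at he he'
      exact hne (hQuniq e i i' he.2 he'.2)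
    have hsum_le : ∑ i ∈ Finset.range t, S i ≤ m₀ := by
      rw [← hF₀sum, ← Finset.sum_biUnion hdisj]
      refine Finset.sum_le_sum_of_subset_of_nonneg ?_ (fun e _ _ => hw e)
      exact Finset.biUnion_subset.mpr fun i _ => Finset.filter_subset _ _
    have hm₀nn : 0 ≤ m₀ := by
      rw [← hF₀sum]; exact Finset.sum_nonneg fun e _ => hw e
    have htQ : (0 : ℚ) < (t : ℚ) := by exact_mod_cast ht
    have hpig : ∃ i ∈ Finset.range t, S i ≤ m₀ / t := by
      refine Finset.exists_le_of_sum_le ⟨0, Finset.mem_range.mpr ht⟩ ?_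
      rw [Finset.sum_const, Finset.card_range, nsmul_eq_mul,
        mul_div_cancel₀ _ (ne_of_gt htQ)]
      exact hsum_le
    obtain ⟨i, hi, hSi⟩ := hpig
    refine ⟨i, Finset.mem_range.mp hi, ?_⟩
    intro m mi hm hmi
    have hmm : m = m₀ := hm.unique hm₀
    subst hmm
    -- the subgraph F₀ minus layer i
    set F' : Finset E := F₀ \ F₀.filter (Q i) with hF'
    have hF'subA : F' ⊆ G.edges \ G.edges.filter (Q i) := by
      intro e he
      rw [hF', Finset.mem_sdiff, Finset.mem_filter] at he
      rw [Finset.mem_sdiff, Finset.mem_filter]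
      exact ⟨hF₀sub he.1, fun h => he.2 ⟨he.1, h.2⟩⟩
    have hF'sum : ∑ e ∈ F', w e = m - S i := by
      rw [hF', Finset.sum_sdiff_eq_sub (Finset.filter_subset _ _), hF₀sum]
    have hmem : m - S i ≤ mi := by
      refine hmi.2 ⟨F', hF'subA, ?_, ?_, hF'sum⟩
      · exact (Finset.sdiff_subset).trans hF₀sub
      · exact bimodalIn_mono G Finset.sdiff_subset hF₀bim
    have hring : (1 - 1 / (t : ℚ)) * m = m - m / (t : ℚ) := by ring
    linarith
  · exact ⟨0, ht, fun m mi hm _ => absurd ⟨m, hm⟩ hex⟩
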